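/- Let A be a class of sets, let α < η ≤ ζ be ordinals, and let j : ⟨V_η, ∈, A ∩ V_η⟩ → ⟨V_ζ, ∈, A ∩ V_ζ⟩ be an elementary embedding with critical point α and j(α) > η. Suppose M ∈ A ∩ V_η is an ordinal L_std-structure whose domain is an ordinal γ with α ≤ γ < η. Then j(M) ∈ A ∩ V_ζ, j(M) is an ordinal L_std-structure with domain j(γ) > η > γ, and the restriction j ↾ γ is an L_std-elementary embedding from M into j(M). -/

import Mathlib

open FirstOrder

universe u

/-- The relations of the standard language `L_std`: one binary relation symbol `ε` and one
unary relation symbol `R`. -/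
inductive LStdRel : ℕ → Type
  | eps : LStdRel 2
  | r : LStdRel 1

/-- The standard first-order language `L_std`, with one binary relation symbol `ε` and one
unary relation symbol `R`. -/
def LStd : FirstOrder.Language := ⟨fun _ => Empty, LStdRel⟩

/-- The `L_std`-structure coded by the ZFC sets `M` (the domain), `E` (a binary relation on `M`,
coded as a set of Kuratowski pairs) and `R` (a unary relation, coded as a subset of `M`). -/
def codedStructure (M E R : ZFSet.{u}) : LStd.Structure ↥M.toSet where
  funMap := fun f _ => f.elim
  RelMap
    | .eps, x => ZFSet.pair (x 0).1 (x 1).1 ∈ E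
    | .r, x => (x 0).1 ∈ R

/-- The ZFC set `S` codes an `L_std`-structure: it is a triple `⟨M, E, R⟩` with `E` a binary
relation on `M` and `R` a unary relation on `M`. -/
def IsLStdCode (S : ZFSet.{u}) : Prop :=
  ∃ M E R : ZFSet.{u}, S = M.pair (E.pair R) ∧
    (∀ p ∈ E, ∃ a ∈ M, ∃ b ∈ M, p = a.pair b) ∧ R ⊆ M

/-- The ZFC set `S` codes an ordinal `L_std`-structure: an `L_std`-structure whose domain is a
(von Neumann) ordinal. -/
def IsOrdinalLStdCode (S : ZFSet.{u}) : Prop :=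
  ∃ M E R : ZFSet.{u}, S = M.pair (E.pair R) ∧ M.IsOrdinal ∧
    (∀ p ∈ E, ∃ a ∈ M, ∃ b ∈ M, p = a.pair b) ∧ R ⊆ M

/-- There is an `L_std`-elementary embedding from the structure coded by `S` into the structure
coded by `T`. -/
def ElemEmbeddable (S T : ZFSet.{u}) : Prop :=
  ∃ M E R N E' R' : ZFSet.{u}, S = M.pair (E.pair R) ∧ T = N.pair (E'.pair R') ∧
    letI := codedStructure M E R
    letI := codedStructure N E' R'
    Nonempty (↥M.toSet ↪ₑ[LStd] ↥N.toSet)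

/-- The structure `⟨V_η, ∈, A ∩ V_η⟩`: the domain consists of the sets of rank `< η`, with `ε`
interpreted as membership and `R` interpreted as membership in the class `A`. -/
def VStructure (η : Ordinal.{u}) (A : Set ZFSet.{u}) :
    LStd.Structure {x : ZFSet.{u} // x.rank < η} where
  funMap := fun f _ => f.elim
  RelMap
    | .eps, x => (x 0).1 ∈ (x 1).1
    | .r, x => (x 0).1 ∈ A

/-- The ZFC set `α` is a (von Neumann) cardinal: it is an ordinal and every one of its elements
has strictly smaller cardinality. -/
def ZFIsCardinal (α : ZFSet.{u}) : Prop :=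
  α.IsOrdinal ∧ ∀ β ∈ α, Cardinal.mk ↥β.toSet < Cardinal.mk ↥α.toSet

/-- For von Neumann ordinals `α`, `η`, `ζ` and a class `A`: there is an elementary embedding
`j : ⟨V_η, ∈, A ∩ V_η⟩ → ⟨V_ζ, ∈, A ∩ V_ζ⟩` with critical point `α` (i.e. `j` fixes every
ordinal `β < α` and moves `α`) such that `j α > η`. -/
def ExtWitness (A : Set ZFSet.{u}) (α η ζ : ZFSet.{u}) : Prop :=
  letI := VStructure η.rank A
  letI := VStructure ζ.rank A
  ∃ j : {x : ZFSet.{u} // x.rank < η.rank} ↪ₑ[LStd] {x : ZFSet.{u} // x.rank < ζ.rank},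
    (∀ (β : ZFSet.{u}) (hβ : β.rank < η.rank), β ∈ α → (j ⟨β, hβ⟩).1 = β) ∧
    ∀ hα : α.rank < η.rank, (j ⟨α, hα⟩).1 ≠ α ∧ η ∈ (j ⟨α, hα⟩).1

section Aux
open FirstOrder FirstOrder.Language

/-- the domain of `VStructure ρ A` -/
abbrev Vty (ρ : Ordinal.{u}) := {x : ZFSet.{u} // x.rank < ρ}

/-- Realization in `VStructure ρ A`. -/
def VRealize (ρ : Ordinal.{u}) (A : Set ZFSet.{u}) {α : Type} {n : ℕ}
    (φ : LStd.BoundedFormula α n) (v : α → Vty.{u} ρ) (xs : Fin n → Vty.{u} ρ) : Prop :=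
  letI := VStructure ρ A
  φ.Realize v xs

/-- Realization in `codedStructure g E R`. -/
def CRealize (g E R : ZFSet.{u}) {α : Type} {n : ℕ}
    (φ : LStd.BoundedFormula α n) (v : α → g.toSet) (xs : Fin n → g.toSet) : Prop :=
  letI := codedStructure g E R
  φ.Realize v xs

/-- every `LStd`-term is a variable -/
def tvar {x : Type} : LStd.Term x → x
  | .var a => a
  | .func f _ => Empty.elim f

lemma term_realize_eq_tvar {M : Type*} (inst : LStd.Structure M) {x : Type}
    (t : LStd.Term x) (v : x → M) :
    Term.realize (M := M) v t = v (tvar t) := by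
  cases t with
  | var a => rfl
  | func f ts => exact Empty.elim f

/-- membership atomic bounded formula -/
def bmem {α : Type} {n : ℕ} (t₁ t₂ : LStd.Term (α ⊕ Fin n)) : LStd.BoundedFormula α n :=
  Relations.boundedFormula₂ (LStdRel.eps : LStd.Relations 2) t₁ t₂

variable {ρ : Ordinal.{u}} {A : Set ZFSet.{u}}

lemma realize_bmem {α : Type} {n : ℕ} {t₁ t₂ : LStd.Term (α ⊕ Fin n)}
    {v : α → Vty.{u} ρ} {xs : Fin n → Vty.{u} ρ} :
    VRealize ρ A (bmem t₁ t₂) v xs ↔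
      (Sum.elim v xs (tvar t₁)).1 ∈ (Sum.elim v xs (tvar t₂)).1 := by
  letI := VStructure ρ A
  rw [VRealize, bmem]
  refine (BoundedFormula.realize_rel₂ (L := LStd) (R := (LStdRel.eps : LStd.Relations 2))).trans ?_
  rw [term_realize_eq_tvar this, term_realize_eq_tvar this]
  exact Iff.rfl

lemma realize_beq {α : Type} {n : ℕ} {t₁ t₂ : LStd.Term (α ⊕ Fin n)}
    {v : α → Vty.{u} ρ} {xs : Fin n → Vty.{u} ρ} :
    VRealize ρ A (Term.bdEqual t₁ t₂) v xs ↔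
      (Sum.elim v xs (tvar t₁)) = (Sum.elim v xs (tvar t₂)) := by
  letI := VStructure ρ A
  rw [VRealize, BoundedFormula.realize_bdEqual, term_realize_eq_tvar this,
    term_realize_eq_tvar this]

lemma VRealize_imp {α : Type} {n : ℕ} {φ ψ : LStd.BoundedFormula α n}
    {v : α → Vty.{u} ρ} {xs : Fin n → Vty.{u} ρ} :
    VRealize ρ A (φ.imp ψ) v xs ↔ (VRealize ρ A φ v xs → VRealize ρ A ψ v xs) := by
  letI := VStructure ρ A
  exact BoundedFormula.realize_imp

lemma VRealize_all {α : Type} {n : ℕ} {φ : LStd.BoundedFormula α (n + 1)}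
    {v : α → Vty.{u} ρ} {xs : Fin n → Vty.{u} ρ} :
    VRealize ρ A φ.all v xs ↔ ∀ a : Vty.{u} ρ, VRealize ρ A φ v (Fin.snoc xs a) := by
  letI := VStructure ρ A
  exact BoundedFormula.realize_all

lemma VRealize_inf {α : Type} {n : ℕ} {φ ψ : LStd.BoundedFormula α n}
    {v : α → Vty.{u} ρ} {xs : Fin n → Vty.{u} ρ} :
    VRealize ρ A (φ ⊓ ψ) v xs ↔ (VRealize ρ A φ v xs ∧ VRealize ρ A ψ v xs) := by
  letI := VStructure ρ A
  exact BoundedFormula.realize_inf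

lemma VRealize_sup {α : Type} {n : ℕ} {φ ψ : LStd.BoundedFormula α n}
    {v : α → Vty.{u} ρ} {xs : Fin n → Vty.{u} ρ} :
    VRealize ρ A (φ ⊔ ψ) v xs ↔ (VRealize ρ A φ v xs ∨ VRealize ρ A ψ v xs) := by
  letI := VStructure ρ A
  exact BoundedFormula.realize_sup

lemma VRealize_ex {α : Type} {n : ℕ} {φ : LStd.BoundedFormula α (n + 1)}
    {v : α → Vty.{u} ρ} {xs : Fin n → Vty.{u} ρ} :
    VRealize ρ A φ.ex v xs ↔ ∃ a : Vty.{u} ρ, VRealize ρ A φ v (Fin.snoc xs a) := by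
  letI := VStructure ρ A
  exact BoundedFormula.realize_ex

end Aux
section Aux2
open FirstOrder FirstOrder.Language

variable {ρ : Ordinal.{u}} {A : Set ZFSet.{u}}

/-- free variable as a term -/
abbrev vf {α : Type} {n : ℕ} (i : α) : LStd.Term (α ⊕ Fin n) := .var (.inl i)
/-- bound variable as a term -/
abbrev vb {α : Type} {n : ℕ} (i : Fin n) : LStd.Term (α ⊕ Fin n) := .var (.inr i)

@[simp] lemma snoc_00 {M : Type*} (xs : Fin 0 → M) (a : M) :
    (Fin.snoc xs a : Fin 1 → M) 0 = a := rfl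
@[simp] lemma snoc_10 {M : Type*} (xs : Fin 1 → M) (a : M) :
    (Fin.snoc xs a : Fin 2 → M) 0 = xs 0 := rfl
@[simp] lemma snoc_11 {M : Type*} (xs : Fin 1 → M) (a : M) :
    (Fin.snoc xs a : Fin 2 → M) 1 = a := rfl

/-- `&0 = {a₁}` in context of one bound variable -/
def singIn : LStd.BoundedFormula (Fin 3) 1 :=
  ((bmem (vb 1) (vb 0)).imp (Term.bdEqual (vb 1) (vf 1))).all ⊓ bmem (vf 1) (vb 0)

/-- `&0 = {a₁, a₂}` in context of one bound variable -/
def upIn : LStd.BoundedFormula (Fin 3) 1 :=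
  ((bmem (vb 1) (vb 0)).imp
    (Term.bdEqual (vb 1) (vf 1) ⊔ Term.bdEqual (vb 1) (vf 2))).all ⊓
  (bmem (vf 1) (vb 0) ⊓ bmem (vf 2) (vb 0))

/-- `a₀ = pair a₁ a₂` -/
def pairF : LStd.BoundedFormula (Fin 3) 0 :=
  ((bmem (vb 0) (vf 0)).imp (singIn ⊔ upIn)).all ⊓
    (((bmem (vb 0) (vf 0)) ⊓ singIn).ex ⊓ ((bmem (vb 0) (vf 0)) ⊓ upIn).ex)

lemma mem_rank_lt {x : ZFSet.{u}} (w : Vty.{u} ρ) (hx : x ∈ w.1) : x.rank < ρ :=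
  (ZFSet.rank_lt_of_mem hx).trans w.2

lemma realize_singIn {v : Fin 3 → Vty.{u} ρ} {xs : Fin 1 → Vty.{u} ρ} :
    VRealize ρ A singIn v xs ↔ (xs 0).1 = {(v 1).1} := by
  rw [singIn, VRealize_inf, VRealize_all]
  simp only [realize_bmem, realize_beq, VRealize_imp, tvar, Sum.elim_inl, Sum.elim_inr,
    snoc_10, snoc_11]
  constructor
  · rintro ⟨h1, h2⟩
    ext z
    rw [ZFSet.mem_singleton]
    constructor
    · intro hz
      have := h1 ⟨z, mem_rank_lt (xs 0) hz⟩ hz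
      exact congrArg Subtype.val this
    · rintro rfl; exact h2
  · rintro h
    constructor
    · intro a ha
      rw [h, ZFSet.mem_singleton] at ha
      exact Subtype.ext ha
    · rw [h]; exact ZFSet.mem_singleton.2 rfl

lemma realize_upIn {v : Fin 3 → Vty.{u} ρ} {xs : Fin 1 → Vty.{u} ρ} :
    VRealize ρ A upIn v xs ↔ (xs 0).1 = {(v 1).1, (v 2).1} := by
  rw [upIn, VRealize_inf, VRealize_all, VRealize_inf]
  simp only [realize_bmem, realize_beq, VRealize_imp, VRealize_sup, tvar, Sum.elim_inl,
    Sum.elim_inr, snoc_10, snoc_11]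
  constructor
  · rintro ⟨h1, h2, h3⟩
    ext z
    rw [ZFSet.mem_insert_iff, ZFSet.mem_singleton]
    constructor
    · intro hz
      rcases h1 ⟨z, mem_rank_lt (xs 0) hz⟩ hz with h | h
      · exact Or.inl (congrArg Subtype.val h)
      · exact Or.inr (congrArg Subtype.val h)
    · rintro (rfl | rfl); exacts [h2, h3]
  · rintro h
    refine ⟨?_, ?_, ?_⟩
    · intro a ha
      rw [h, ZFSet.mem_insert_iff, ZFSet.mem_singleton] at ha
      rcases ha with h' | h'
      · exact Or.inl (Subtype.ext h')
      · exact Or.inr (Subtype.ext h')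
    · rw [h]; exact ZFSet.mem_insert _ _
    · rw [h, ZFSet.mem_insert_iff]; exact Or.inr (ZFSet.mem_singleton.2 rfl)

lemma realize_pairF {v : Fin 3 → Vty.{u} ρ} {xs : Fin 0 → Vty.{u} ρ} :
    VRealize ρ A pairF v xs ↔ (v 0).1 = ZFSet.pair (v 1).1 (v 2).1 := by
  rw [pairF, VRealize_inf, VRealize_inf, VRealize_all, VRealize_ex, VRealize_ex]
  simp only [realize_bmem, VRealize_imp, VRealize_sup, VRealize_inf, realize_singIn,
    realize_upIn, tvar, Sum.elim_inl, Sum.elim_inr, snoc_00]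
  constructor
  · rintro ⟨h1, ⟨w1, hw1, hs1⟩, ⟨w2, hw2, hs2⟩⟩
    ext z
    rw [ZFSet.pair, ZFSet.mem_insert_iff, ZFSet.mem_singleton]
    constructor
    · intro hz
      rcases h1 ⟨z, mem_rank_lt (v 0) hz⟩ hz with h | h
      · exact Or.inl h
      · exact Or.inr h
    · rintro (rfl | rfl)
      · rwa [← hs1]
      · rwa [← hs2]
  · rintro h
    refine ⟨?_, ?_, ?_⟩
    · intro a ha
      rw [h, ZFSet.pair, ZFSet.mem_insert_iff, ZFSet.mem_singleton] at ha
      exact ha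
    · refine ⟨⟨{(v 1).1}, ?_⟩, ?_, rfl⟩
      · exact mem_rank_lt ⟨(v 0).1, (v 0).2⟩ (by rw [h, ZFSet.pair]; exact ZFSet.mem_insert _ _)
      · show ({(v 1).1} : ZFSet) ∈ (v 0).1
        rw [h, ZFSet.pair]; exact ZFSet.mem_insert _ _
    · refine ⟨⟨{(v 1).1, (v 2).1}, ?_⟩, ?_, rfl⟩
      · refine mem_rank_lt ⟨(v 0).1, (v 0).2⟩ ?_
        rw [h, ZFSet.pair, ZFSet.mem_insert_iff]
        exact Or.inr (ZFSet.mem_singleton.2 rfl)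
      · show ({(v 1).1, (v 2).1} : ZFSet) ∈ (v 0).1
        rw [h, ZFSet.pair, ZFSet.mem_insert_iff]
        exact Or.inr (ZFSet.mem_singleton.2 rfl)

end Aux2
section Aux3
open FirstOrder FirstOrder.Language

variable {ρ : Ordinal.{u}} {A : Set ZFSet.{u}}

@[simp] lemma snoc_20 {M : Type*} (xs : Fin 2 → M) (a : M) :
    (Fin.snoc xs a : Fin 3 → M) 0 = xs 0 := rfl
@[simp] lemma snoc_21 {M : Type*} (xs : Fin 2 → M) (a : M) :
    (Fin.snoc xs a : Fin 3 → M) 1 = xs 1 := rfl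
@[simp] lemma snoc_22 {M : Type*} (xs : Fin 2 → M) (a : M) :
    (Fin.snoc xs a : Fin 3 → M) 2 = a := rfl

lemma VRealize_relabel {α β : Type} {n k : ℕ} {g : α → β ⊕ Fin n}
    {φ : LStd.BoundedFormula α k} {v : β → Vty.{u} ρ} {xs : Fin (n + k) → Vty.{u} ρ} :
    VRealize ρ A (φ.relabel g) v xs ↔
      VRealize ρ A φ (Sum.elim v (xs ∘ Fin.castAdd k) ∘ g) (xs ∘ Fin.natAdd n) := by
  letI := VStructure ρ A
  exact BoundedFormula.realize_relabel

/-- `a₀ ⊆ a₁` -/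
def subF : LStd.BoundedFormula (Fin 2) 0 :=
  ((bmem (vb 0) (vf 0)).imp (bmem (vb 0) (vf 1))).all

lemma realize_subF {v : Fin 2 → Vty.{u} ρ} {xs : Fin 0 → Vty.{u} ρ} :
    VRealize ρ A subF v xs ↔ (v 0).1 ⊆ (v 1).1 := by
  rw [subF, VRealize_all]
  simp only [realize_bmem, VRealize_imp, tvar, Sum.elim_inl, Sum.elim_inr, snoc_00]
  constructor
  · intro h z hz
    exact h ⟨z, mem_rank_lt (v 0) hz⟩ hz
  · intro h a ha
    exact h ha

/-- `a₀` is transitive -/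
def transF : LStd.BoundedFormula (Fin 1) 0 :=
  ((bmem (vb 0) (vf 0)).imp
    (((bmem (vb 1) (vb 0)).imp (bmem (vb 1) (vf 0))).all)).all

lemma realize_transF {v : Fin 1 → Vty.{u} ρ} {xs : Fin 0 → Vty.{u} ρ} :
    VRealize ρ A transF v xs ↔ (v 0).1.IsTransitive := by
  rw [transF, VRealize_all]
  simp only [VRealize_all, realize_bmem, VRealize_imp, tvar, Sum.elim_inl, Sum.elim_inr,
    snoc_00, snoc_10, snoc_11]
  constructor
  · intro h z hz y hy
    exact h ⟨z, mem_rank_lt (v 0) hz⟩ hz ⟨y, mem_rank_lt ⟨z, mem_rank_lt (v 0) hz⟩ hy⟩ hy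
  · intro h a ha b hb
    exact h a.1 ha hb

/-- membership is transitive on members of `a₀` -/
def mtF : LStd.BoundedFormula (Fin 1) 0 :=
  ((bmem (vb 0) (vf 0)).imp
    (((bmem (vb 1) (vb 0)).imp
      (((bmem (vb 2) (vb 1)).imp (bmem (vb 2) (vb 0))).all)).all)).all

lemma realize_mtF {v : Fin 1 → Vty.{u} ρ} {xs : Fin 0 → Vty.{u} ρ} :
    VRealize ρ A mtF v xs ↔
      ∀ y z w : ZFSet.{u}, y ∈ z → z ∈ w → w ∈ (v 0).1 → y ∈ w := by
  rw [mtF, VRealize_all]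
  simp only [VRealize_all, realize_bmem, VRealize_imp, tvar, Sum.elim_inl, Sum.elim_inr,
    snoc_00, snoc_10, snoc_11, snoc_20, snoc_21, snoc_22]
  constructor
  · intro h y z w hyz hzw hwv
    have hw : w.rank < ρ := mem_rank_lt (v 0) hwv
    have hz : z.rank < ρ := mem_rank_lt ⟨w, hw⟩ hzw
    exact h ⟨w, hw⟩ hwv ⟨z, hz⟩ hzw ⟨y, mem_rank_lt ⟨z, hz⟩ hyz⟩ hyz
  · intro h a ha b hb c hc
    exact h c.1 b.1 a.1 hc hb ha

lemma realize_ord {v : Fin 1 → Vty.{u} ρ} {xs : Fin 0 → Vty.{u} ρ} :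
    VRealize ρ A (transF ⊓ mtF) v xs ↔ (v 0).1.IsOrdinal := by
  rw [VRealize_inf, realize_transF, realize_mtF]
  constructor
  · rintro ⟨h1, h2⟩
    exact ⟨h1, fun {y z w} => h2 y z w⟩
  · rintro ⟨h1, h2⟩
    exact ⟨h1, fun y z w => h2⟩

/-- `a₀` is a set of Kuratowski pairs of elements of `a₁` -/
def relOnF : LStd.BoundedFormula (Fin 2) 0 :=
  ((bmem (vb 0) (vf 0)).imp
    (((bmem (vb 1) (vf 1)) ⊓
      (((bmem (vb 2) (vf 1)) ⊓
        pairF.relabel (fun i : Fin 3 => Sum.inr i)).ex)).ex)).all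

lemma realize_relOnF {v : Fin 2 → Vty.{u} ρ} {xs : Fin 0 → Vty.{u} ρ} :
    VRealize ρ A relOnF v xs ↔
      ∀ p ∈ (v 0).1, ∃ a ∈ (v 1).1, ∃ b ∈ (v 1).1, p = ZFSet.pair a b := by
  rw [relOnF, VRealize_all]
  simp only [VRealize_ex, VRealize_inf, VRealize_imp, realize_bmem, VRealize_relabel,
    realize_pairF, tvar, Sum.elim_inl, Sum.elim_inr, Function.comp, snoc_00, snoc_10, snoc_11,
    snoc_20, snoc_21, snoc_22, Fin.castAdd]
  constructor
  · intro h p hp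
    obtain ⟨a, ha, b, hb, heq⟩ := h ⟨p, mem_rank_lt (v 0) hp⟩ hp
    exact ⟨a.1, ha, b.1, hb, heq⟩
  · intro h p hp
    obtain ⟨a, ha, b, hb, heq⟩ := h p.1 hp
    exact ⟨⟨a, mem_rank_lt (v 1) ha⟩, ha, ⟨b, mem_rank_lt (v 1) hb⟩, hb, heq⟩

end Aux3
section Aux4
open FirstOrder FirstOrder.Language

variable {ρ : Ordinal.{u}} {A : Set ZFSet.{u}}

/-- context with three additional parameters: domain, E, R -/
abbrev Ctx (β : Type) : Type := β ⊕ Fin 3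

/-- lift a variable into the parameter context -/
abbrev liftv {β : Type} {n : ℕ} : β ⊕ Fin n → Ctx β ⊕ Fin n := Sum.map Sum.inl id

/-- lift a variable into one more bound variable -/
abbrev lift1 {β : Type} {n : ℕ} : Ctx β ⊕ Fin n → Ctx β ⊕ Fin (n + 1) :=
  Sum.map id Fin.castSucc

/-- relativized atomic `ε` formula: `∃ p ∈ E, p = pair s t` -/
def epsT {β : Type} {n : ℕ} (s t : β ⊕ Fin n) : LStd.BoundedFormula (Ctx β) n :=
  ((bmem (vb (Fin.last n)) (vf (Sum.inr 1))) ⊓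
    pairF.relabel
      ![Sum.inr (Fin.last n), lift1 (liftv s), lift1 (liftv t)]).ex

lemma elim_snoc_last {β : Type} {n : ℕ} {v : Ctx β → Vty.{u} ρ} {xs : Fin n → Vty.{u} ρ}
    {w : Vty.{u} ρ} :
    Sum.elim v (Fin.snoc xs w ∘ Fin.castAdd 0) (Sum.inr (Fin.last n)) = w := by
  simp

lemma elim_snoc_lift1 {β : Type} {n : ℕ} {v : Ctx β → Vty.{u} ρ} {xs : Fin n → Vty.{u} ρ}
    {w : Vty.{u} ρ} (z : Ctx β ⊕ Fin n) :
    Sum.elim v (Fin.snoc xs w ∘ Fin.castAdd 0) (lift1 z) = Sum.elim v xs z := by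
  cases z <;> simp

lemma realize_epsT {β : Type} {n : ℕ} (s t : β ⊕ Fin n)
    {v : Ctx β → Vty.{u} ρ} {xs : Fin n → Vty.{u} ρ} :
    VRealize ρ A (epsT s t) v xs ↔
      ZFSet.pair (Sum.elim v xs (liftv s)).1 (Sum.elim v xs (liftv t)).1
        ∈ (v (Sum.inr 1)).1 := by
  rw [epsT, VRealize_ex]
  simp only [VRealize_inf, realize_bmem, VRealize_relabel, realize_pairF, tvar,
    Sum.elim_inl, Sum.elim_inr, Function.comp]
  simp only [Matrix.cons_val_zero, Matrix.cons_val_one, Matrix.head_cons,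
    Matrix.cons_val_two, Matrix.tail_cons, elim_snoc_last, elim_snoc_lift1, Fin.snoc_last]
  constructor
  · rintro ⟨w, hw, heq⟩
    rwa [heq] at hw
  · intro h
    refine ⟨⟨_, mem_rank_lt (v (Sum.inr 1)) h⟩, h, rfl⟩

end Aux4
section Aux5
open FirstOrder FirstOrder.Language

variable {ρ : Ordinal.{u}} {A : Set ZFSet.{u}}

/-- relativization of an `LStd` formula to the coded structure with parameters
`inr 0` (domain), `inr 1` (`E`), `inr 2` (`R`) -/
def RelF {β : Type} : ∀ {n : ℕ}, LStd.BoundedFormula β n → LStd.BoundedFormula (Ctx β) n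
  | _, .falsum => .falsum
  | _, .equal t₁ t₂ => Term.bdEqual (.var (liftv (tvar t₁))) (.var (liftv (tvar t₂)))
  | _, .rel LStdRel.eps ts => epsT (tvar (ts 0)) (tvar (ts 1))
  | _, .rel LStdRel.r ts => bmem (.var (liftv (tvar (ts 0)))) (vf (Sum.inr 2))
  | _, .imp φ ψ => (RelF φ).imp (RelF ψ)
  | _, .all φ => ((bmem (vb (Fin.last _)) (vf (Sum.inr 0))).imp (RelF φ)).all

lemma VRealize_falsum {α : Type} {n : ℕ} {v : α → Vty.{u} ρ} {xs : Fin n → Vty.{u} ρ} :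
    VRealize ρ A (.falsum : LStd.BoundedFormula α n) v xs ↔ False := Iff.rfl

lemma CRealize_falsum {g E R : ZFSet.{u}} {α : Type} {n : ℕ} {v : α → g.toSet}
    {xs : Fin n → g.toSet} :
    CRealize g E R (.falsum : LStd.BoundedFormula α n) v xs ↔ False := Iff.rfl

lemma CRealize_imp {g E R : ZFSet.{u}} {α : Type} {n : ℕ} {φ ψ : LStd.BoundedFormula α n}
    {v : α → g.toSet} {xs : Fin n → g.toSet} :
    CRealize g E R (φ.imp ψ) v xs ↔ (CRealize g E R φ v xs → CRealize g E R ψ v xs) := by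
  letI := codedStructure g E R
  exact BoundedFormula.realize_imp

lemma CRealize_all {g E R : ZFSet.{u}} {α : Type} {n : ℕ} {φ : LStd.BoundedFormula α (n + 1)}
    {v : α → g.toSet} {xs : Fin n → g.toSet} :
    CRealize g E R φ.all v xs ↔ ∀ a : g.toSet, CRealize g E R φ v (Fin.snoc xs a) := by
  letI := codedStructure g E R
  exact BoundedFormula.realize_all

lemma CRealize_beq {g E R : ZFSet.{u}} {α : Type} {n : ℕ} {t₁ t₂ : LStd.Term (α ⊕ Fin n)}
    {v : α → g.toSet} {xs : Fin n → g.toSet} :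
    CRealize g E R (.equal t₁ t₂) v xs ↔ Sum.elim v xs (tvar t₁) = Sum.elim v xs (tvar t₂) := by
  letI := codedStructure g E R
  rw [CRealize]
  show Term.realize (Sum.elim v xs) t₁ = Term.realize (Sum.elim v xs) t₂ ↔ _
  rw [term_realize_eq_tvar this, term_realize_eq_tvar this]

lemma CRealize_eps {g E R : ZFSet.{u}} {α : Type} {n : ℕ}
    {ts : Fin 2 → LStd.Term (α ⊕ Fin n)} {v : α → g.toSet} {xs : Fin n → g.toSet} :
    CRealize g E R (.rel (LStdRel.eps : LStd.Relations 2) ts) v xs ↔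
      ZFSet.pair (Sum.elim v xs (tvar (ts 0))).1 (Sum.elim v xs (tvar (ts 1))).1 ∈ E := by
  letI := codedStructure g E R
  rw [CRealize]
  show ZFSet.pair (Term.realize (Sum.elim v xs) (ts 0)).1
      (Term.realize (Sum.elim v xs) (ts 1)).1 ∈ E ↔ _
  rw [term_realize_eq_tvar this, term_realize_eq_tvar this]

lemma CRealize_r {g E R : ZFSet.{u}} {α : Type} {n : ℕ}
    {ts : Fin 1 → LStd.Term (α ⊕ Fin n)} {v : α → g.toSet} {xs : Fin n → g.toSet} :
    CRealize g E R (.rel (LStdRel.r : LStd.Relations 1) ts) v xs ↔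
      (Sum.elim v xs (tvar (ts 0))).1 ∈ R := by
  letI := codedStructure g E R
  rw [CRealize]
  show (Term.realize (Sum.elim v xs) (ts 0)).1 ∈ R ↔ _
  rw [term_realize_eq_tvar this]

/-- inclusion of the coded domain into `V_ρ` -/
def iog {g : ZFSet.{u}} (hg : g.rank < ρ) : g.toSet → Vty.{u} ρ :=
  fun x => ⟨x.1, (ZFSet.rank_lt_of_mem x.2).trans hg⟩

lemma elim_liftv {β : Type} {n : ℕ} {g : ZFSet.{u}} (hg : g.rank < ρ)
    (p : Fin 3 → Vty.{u} ρ) (v : β → g.toSet) (xs : Fin n → g.toSet) (z : β ⊕ Fin n) :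
    Sum.elim (Sum.elim (iog hg ∘ v) p) (iog hg ∘ xs) (liftv z) =
      iog hg (Sum.elim v xs z) := by
  cases z <;> rfl

/-- Key absoluteness lemma: realization of the relativized formula in `V_ρ` agrees with
realization in the coded structure. -/
lemma relF_absolute {β : Type} {g E R : ZFSet.{u}}
    (hg : g.rank < ρ) (hE : E.rank < ρ) (hR : R.rank < ρ) :
    ∀ {n : ℕ} (φ : LStd.BoundedFormula β n) (v : β → g.toSet) (xs : Fin n → g.toSet),
    VRealize ρ A (RelF φ) (Sum.elim (iog hg ∘ v) ![⟨g, hg⟩, ⟨E, hE⟩, ⟨R, hR⟩])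
        (iog hg ∘ xs) ↔
      CRealize g E R φ v xs := by
  intro n φ
  induction φ with
  | falsum =>
    intro v xs
    rw [RelF, VRealize_falsum, CRealize_falsum]
  | equal t₁ t₂ =>
    intro v xs
    rw [RelF, realize_beq, CRealize_beq]
    simp only [tvar, elim_liftv]
    constructor
    · intro h
      have h2 := congrArg Subtype.val h
      exact Subtype.ext h2
    · intro h
      rw [h]
  | rel r ts =>
    intro v xs
    cases r with
    | eps =>
      rw [RelF, realize_epsT, CRealize_eps]
      simp only [elim_liftv]
      rfl
    | r =>
      rw [RelF, realize_bmem, CRealize_r]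
      simp only [tvar, elim_liftv]
      rfl
  | imp φ ψ ih1 ih2 =>
    intro v xs
    rw [RelF, VRealize_imp, CRealize_imp, ih1, ih2]
  | all φ ih =>
    intro v xs
    rw [RelF, VRealize_all, CRealize_all]
    constructor
    · intro h q
      have h' := h (iog hg q)
      rw [VRealize_imp, realize_bmem] at h'
      simp only [tvar, Sum.elim_inr, Sum.elim_inl, Fin.snoc_last, Matrix.cons_val_zero] at h'
      have h'' := h' q.2
      rw [← Fin.comp_snoc, ih] at h''
      exact h''
    · intro h a
      rw [VRealize_imp, realize_bmem]
      simp only [tvar, Sum.elim_inr, Sum.elim_inl, Fin.snoc_last, Matrix.cons_val_zero]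
      intro ha
      have ha' : a = iog hg ⟨a.1, ha⟩ := Subtype.ext rfl
      rw [ha', ← Fin.comp_snoc, ih]
      exact h ⟨a.1, ha⟩
end Aux5
section Aux6
open FirstOrder FirstOrder.Language

variable {ρ : Ordinal.{u}} {A : Set ZFSet.{u}}

/-- atomic formula `a₀ ∈ A` -/
def inAF : LStd.BoundedFormula (Fin 1) 0 :=
  Relations.boundedFormula₁ (LStdRel.r : LStd.Relations 1) (vf 0)

lemma realize_inAF {v : Fin 1 → Vty.{u} ρ} {xs : Fin 0 → Vty.{u} ρ} :
    VRealize ρ A inAF v xs ↔ (v 0).1 ∈ A := by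
  letI := VStructure ρ A
  rw [VRealize, inAF]
  refine (BoundedFormula.realize_rel₁ (L := LStd) (R := (LStdRel.r : LStd.Relations 1))).trans ?_
  exact Iff.rfl

/-- atomic formula `a₀ ∈ a₁` -/
def memF : LStd.BoundedFormula (Fin 2) 0 := bmem (vf 0) (vf 1)

lemma realize_memF {v : Fin 2 → Vty.{u} ρ} {xs : Fin 0 → Vty.{u} ρ} :
    VRealize ρ A memF v xs ↔ (v 0).1 ∈ (v 1).1 := by
  rw [memF, realize_bmem]; exact Iff.rfl

lemma rank_pair_left {a b : ZFSet.{u}} : a.rank < (ZFSet.pair a b).rank :=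
  lt_trans (ZFSet.rank_lt_of_mem (ZFSet.mem_singleton.2 rfl))
    (ZFSet.rank_lt_of_mem (ZFSet.mem_insert _ _))

lemma rank_pair_right {a b : ZFSet.{u}} : b.rank < (ZFSet.pair a b).rank :=
  lt_trans (ZFSet.rank_lt_of_mem (ZFSet.mem_insert_iff.2 (Or.inr (ZFSet.mem_singleton.2 rfl))))
    (ZFSet.rank_lt_of_mem (ZFSet.mem_insert_iff.2 (Or.inr (ZFSet.mem_singleton.2 rfl))))

end Aux6

theorem restriction_isElementary' (A : Set ZFSet.{u}) (α η ζ : ZFSet.{u})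
    (hα : α.IsOrdinal) (hη : η.IsOrdinal) (hζ : ζ.IsOrdinal)
    (hαη : α ∈ η) (hηζ : η ⊆ ζ) :
    letI := VStructure η.rank A
    letI := VStructure ζ.rank A
    ∀ j : {x : ZFSet.{u} // x.rank < η.rank} ↪ₑ[LStd] {x : ZFSet.{u} // x.rank < ζ.rank},
      (∀ (β : ZFSet.{u}) (hβ : β.rank < η.rank), β ∈ α → (j ⟨β, hβ⟩).1 = β) →
      (∀ hα' : α.rank < η.rank, (j ⟨α, hα'⟩).1 ≠ α ∧ η ∈ (j ⟨α, hα'⟩).1) →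
      ∀ (M γ E R : ZFSet.{u}) (hMη : M.rank < η.rank) (hγη : γ.rank < η.rank),
        M ∈ A → M = γ.pair (E.pair R) → γ.IsOrdinal →
        (∀ p ∈ E, ∃ a ∈ γ, ∃ b ∈ γ, p = a.pair b) → R ⊆ γ →
        α ⊆ γ → γ ∈ η →
        ((j ⟨M, hMη⟩).1 ∈ A ∧ (j ⟨M, hMη⟩).1.rank < ζ.rank) ∧
        ∃ E' R' : ZFSet.{u},
          (j ⟨M, hMη⟩).1 = (j ⟨γ, hγη⟩).1.pair (E'.pair R') ∧
          (j ⟨γ, hγη⟩).1.IsOrdinal ∧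
          (∀ p ∈ E', ∃ a ∈ (j ⟨γ, hγη⟩).1, ∃ b ∈ (j ⟨γ, hγη⟩).1, p = a.pair b) ∧
          R' ⊆ (j ⟨γ, hγη⟩).1 ∧
          η ∈ (j ⟨γ, hγη⟩).1 ∧ γ ∈ η ∧
          (letI := codedStructure γ E R
           letI := codedStructure (j ⟨γ, hγη⟩).1 E' R'
           ∃ e : ↥γ.toSet ↪ₑ[LStd] ↥(j ⟨γ, hγη⟩).1.toSet,
             ∀ (β : ZFSet.{u}) (hβγ : β ∈ γ) (hβη : β.rank < η.rank),
               (e ⟨β, hβγ⟩).1 = (j ⟨β, hβη⟩).1) := by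
  letI := VStructure η.rank A
  letI := VStructure ζ.rank A
  intro j hfix hcrit M γ E R hMη hγη hMA hMeq hγord hErel hRsub hαγ hγmem
  -- generic transfer along `j`
  have jtr : ∀ {κ : Type} (φ : LStd.Formula κ) (x : κ → Vty.{u} η.rank),
      VRealize ζ.rank A φ (fun a => (j (x a) : Vty.{u} ζ.rank)) default ↔
        VRealize η.rank A φ x default := by
    intro κ φ x
    exact j.map_formula φ x
  -- rank bookkeeping
  set X : ZFSet.{u} := E.pair R with hX
  have hXr : X.rank < η.rank := lt_trans (rank_pair_right (a := γ)) (hMeq ▸ hMη)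
  have hEr : E.rank < η.rank := lt_trans rank_pair_left hXr
  have hRr : R.rank < η.rank := lt_trans rank_pair_right hXr
  -- j commutes with pairing
  have jpair : ∀ (a b : ZFSet.{u}) (hp : (ZFSet.pair a b).rank < η.rank)
      (ha : a.rank < η.rank) (hb : b.rank < η.rank),
      (j ⟨ZFSet.pair a b, hp⟩).1 = ZFSet.pair (j ⟨a, ha⟩).1 (j ⟨b, hb⟩).1 := by
    intro a b hp ha hb
    have h1 : VRealize η.rank A pairF ![⟨ZFSet.pair a b, hp⟩, ⟨a, ha⟩, ⟨b, hb⟩] default :=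
      realize_pairF.2 rfl
    have h2 := (jtr pairF _).2 h1
    have h3 := realize_pairF.1 h2
    exact h3
  -- j M ∈ A
  have hjMA : (j ⟨M, hMη⟩).1 ∈ A := by
    have h1 : VRealize η.rank A inAF ![⟨M, hMη⟩] default := realize_inAF.2 hMA
    exact realize_inAF.1 ((jtr inAF _).2 h1)
  refine ⟨⟨hjMA, (j ⟨M, hMη⟩).2⟩, (j ⟨E, hEr⟩).1, (j ⟨R, hRr⟩).1, ?_, ?_, ?_, ?_, ?_, hγmem, ?_⟩
  · -- jM = pair jγ (pair jE jR)
    have hMX : M = ZFSet.pair γ X := hMeq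
    have hMp : (ZFSet.pair γ X).rank < η.rank := hMX ▸ hMη
    have e1 : (⟨M, hMη⟩ : Vty.{u} η.rank) = ⟨ZFSet.pair γ X, hMp⟩ := Subtype.ext hMX
    rw [e1, jpair γ X hMp hγη hXr, jpair E R hXr hEr hRr]
  · -- jγ is an ordinal
    have h1 : VRealize η.rank A (transF ⊓ mtF) ![⟨γ, hγη⟩] default := realize_ord.2 hγord
    exact realize_ord.1 ((jtr _ _).2 h1)
  · -- jE is a set of pairs on jγ
    have h1 : VRealize η.rank A relOnF ![⟨E, hEr⟩, ⟨γ, hγη⟩] default := realize_relOnF.2 hErel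
    exact realize_relOnF.1 ((jtr _ _).2 h1)
  · -- jR ⊆ jγ
    have h1 : VRealize η.rank A subF ![⟨R, hRr⟩, ⟨γ, hγη⟩] default := realize_subF.2 hRsub
    exact realize_subF.1 ((jtr _ _).2 h1)
  · -- η ∈ jγ
    have hαr : α.rank < η.rank := ZFSet.rank_lt_of_mem hαη
    have h1 : VRealize η.rank A subF ![⟨α, hαr⟩, ⟨γ, hγη⟩] default := realize_subF.2 hαγ
    have h2 := realize_subF.1 ((jtr _ _).2 h1)
    exact h2 (hcrit hαr).2
  · -- the elementary embedding
    have hjγζ : (j ⟨γ, hγη⟩).1.rank < ζ.rank := (j ⟨γ, hγη⟩).2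
    have hjEζ : (j ⟨E, hEr⟩).1.rank < ζ.rank := (j ⟨E, hEr⟩).2
    have hjRζ : (j ⟨R, hRr⟩).1.rank < ζ.rank := (j ⟨R, hRr⟩).2
    have jmem : ∀ x y : Vty.{u} η.rank, x.1 ∈ y.1 → (j x).1 ∈ (j y).1 := by
      intro x y hxy
      have h1 : VRealize η.rank A memF ![x, y] default := realize_memF.2 hxy
      exact realize_memF.1 ((jtr _ _).2 h1)
    let toFun : γ.toSet → (j ⟨γ, hγη⟩).1.toSet := fun x =>
      ⟨(j (iog hγη x)).1, id (jmem (iog hγη x) ⟨γ, hγη⟩ (id x.2))⟩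
    have key : ∀ {k : ℕ} (φ : LStd.Formula (Fin k)) (x : Fin k → γ.toSet),
        CRealize (j ⟨γ, hγη⟩).1 (j ⟨E, hEr⟩).1 (j ⟨R, hRr⟩).1 φ (toFun ∘ x) default ↔
          CRealize γ E R φ x default := by
      intro k φ x
      have habs1 := relF_absolute (A := A) hγη hEr hRr φ x default
      rw [Subsingleton.elim (iog hγη ∘ (default : Fin 0 → γ.toSet))
        (default : Fin 0 → Vty.{u} η.rank)] at habs1
      have habs2 := relF_absolute (A := A) hjγζ hjEζ hjRζ φ (toFun ∘ x) default
      rw [Subsingleton.elim (iog hjγζ ∘ (default : Fin 0 → (j ⟨γ, hγη⟩).1.toSet))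
        (default : Fin 0 → Vty.{u} ζ.rank)] at habs2
      rw [← habs1, ← habs2]
      have htr := jtr (RelF φ)
        (Sum.elim (iog hγη ∘ x) ![⟨γ, hγη⟩, ⟨E, hEr⟩, ⟨R, hRr⟩])
      have hfun : (fun a => (j ((Sum.elim (iog hγη ∘ x)
          ![⟨γ, hγη⟩, ⟨E, hEr⟩, ⟨R, hRr⟩]) a) : Vty.{u} ζ.rank)) =
          Sum.elim (iog hjγζ ∘ (toFun ∘ x))
            ![⟨(j ⟨γ, hγη⟩).1, hjγζ⟩, ⟨(j ⟨E, hEr⟩).1, hjEζ⟩, ⟨(j ⟨R, hRr⟩).1, hjRζ⟩] := by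
        funext a
        rcases a with b | c
        · rfl
        · fin_cases c <;> rfl
      rw [hfun] at htr
      exact htr
    letI := codedStructure γ E R
    letI := codedStructure (j ⟨γ, hγη⟩).1 (j ⟨E, hEr⟩).1 (j ⟨R, hRr⟩).1
    refine ⟨⟨toFun, fun k φ x => key φ x⟩, fun β hβγ hβη => rfl⟩

/-- Let `A` be a class of sets, let `α < η ≤ ζ` be (von Neumann) ordinals, and let
`j : ⟨V_η, ∈, A ∩ V_η⟩ → ⟨V_ζ, ∈, A ∩ V_ζ⟩` be an elementary embedding with critical point `α`
and `j α > η`.  If `M ∈ A ∩ V_η` is an ordinal `L_std`-structure whose domain is an ordinal `γ`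
with `α ≤ γ < η`, then `j M ∈ A ∩ V_ζ`, `j M` is an ordinal `L_std`-structure with domain
`j γ > η > γ`, and the restriction `j ↾ γ` is an `L_std`-elementary embedding from `M` into
`j M`. -/
theorem restriction_isElementary (A : Set ZFSet.{u}) (α η ζ : ZFSet.{u})
    (hα : α.IsOrdinal) (hη : η.IsOrdinal) (hζ : ζ.IsOrdinal)
    (hαη : α ∈ η) (hηζ : η ⊆ ζ) :
    letI := VStructure η.rank A
    letI := VStructure ζ.rank A
    ∀ j : {x : ZFSet.{u} // x.rank < η.rank} ↪ₑ[LStd] {x : ZFSet.{u} // x.rank < ζ.rank},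
      -- `j` has critical point `α` ...
      (∀ (β : ZFSet.{u}) (hβ : β.rank < η.rank), β ∈ α → (j ⟨β, hβ⟩).1 = β) →
      (∀ hα' : α.rank < η.rank, (j ⟨α, hα'⟩).1 ≠ α ∧ η ∈ (j ⟨α, hα'⟩).1) →
      -- ... and `M = ⟨γ, E, R⟩ ∈ A ∩ V_η` is an ordinal `L_std`-structure with `α ≤ γ < η`.
      ∀ (M γ E R : ZFSet.{u}) (hMη : M.rank < η.rank) (hγη : γ.rank < η.rank),
        M ∈ A → M = γ.pair (E.pair R) → γ.IsOrdinal →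
        (∀ p ∈ E, ∃ a ∈ γ, ∃ b ∈ γ, p = a.pair b) → R ⊆ γ →
        α ⊆ γ → γ ∈ η →
        -- Then `j M ∈ A ∩ V_ζ` ...
        ((j ⟨M, hMη⟩).1 ∈ A ∧ (j ⟨M, hMη⟩).1.rank < ζ.rank) ∧
        -- ... and `j M` is an ordinal `L_std`-structure with domain `j γ > η > γ` ...
        ∃ E' R' : ZFSet.{u},
          (j ⟨M, hMη⟩).1 = (j ⟨γ, hγη⟩).1.pair (E'.pair R') ∧
          (j ⟨γ, hγη⟩).1.IsOrdinal ∧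
          (∀ p ∈ E', ∃ a ∈ (j ⟨γ, hγη⟩).1, ∃ b ∈ (j ⟨γ, hγη⟩).1, p = a.pair b) ∧
          R' ⊆ (j ⟨γ, hγη⟩).1 ∧
          η ∈ (j ⟨γ, hγη⟩).1 ∧ γ ∈ η ∧
          -- ... and `j ↾ γ` is an `L_std`-elementary embedding from `M` into `j M`.
          (letI := codedStructure γ E R
           letI := codedStructure (j ⟨γ, hγη⟩).1 E' R'
           ∃ e : ↥γ.toSet ↪ₑ[LStd] ↥(j ⟨γ, hγη⟩).1.toSet,
             ∀ (β : ZFSet.{u}) (hβγ : β ∈ γ) (hβη : β.rank < η.rank),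
               (e ⟨β, hβγ⟩).1 = (j ⟨β, hβη⟩).1) := 
  restriction_isElementary' A α η ζ hα hη hζ hαη hηζ
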